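/- If at iteration k the adaptive step x_{k+1} = x_k − (1/(2L_k)) g̃(x_k) and the acceptance condition f̃(x_{k+1}) ≤ f̃(x_k) + ⟨g̃(x_k), x_{k+1}−x_k⟩ + L_k‖x_{k+1}−x_k‖² + Δ²/(2L_k) + 2δ hold, together with |f − f̃| ≤ δ, then f(x_{k+1}) − f(x_k) ≤ Δ²/(2L_k) − ‖g̃(x_k)‖²/(4L_k) + 4δ. -/
import Mathlib


open scoped RealInnerProductSpace

theorem stmt15 {n : ℕ} (f ft : EuclideanSpace ℝ (Fin n) → ℝ) (Lk Δ δ : ℝ)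
    (hLk : 0 < Lk) (hΔ : 0 ≤ Δ) (hδ : 0 ≤ δ)
    (gt : EuclideanSpace ℝ (Fin n) → EuclideanSpace ℝ (Fin n))
    (herr : ∀ z, |f z - ft z| ≤ δ)
    (xk xk1 : EuclideanSpace ℝ (Fin n))
    (hstep : xk1 = xk - (1 / (2 * Lk)) • gt xk)
    (haccept : ft xk1 ≤ ft xk + ⟪gt xk, xk1 - xk⟫ +
      Lk * ‖xk1 - xk‖ ^ 2 + Δ ^ 2 / (2 * Lk) + 2 * δ) :
    f xk1 - f xk ≤ Δ ^ 2 / (2 * Lk) - ‖gt xk‖ ^ 2 / (4 * Lk) + 4 * δ := by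
  have hd : xk1 - xk = -((1 / (2 * Lk)) • gt xk) := by rw [hstep]; abel
  have hinner : ⟪gt xk, xk1 - xk⟫ = -(1 / (2 * Lk)) * ‖gt xk‖ ^ 2 := by
    rw [hd, inner_neg_right, real_inner_smul_right, real_inner_self_eq_norm_sq]
    ring
  have hnorm : ‖xk1 - xk‖ ^ 2 = (1 / (2 * Lk)) ^ 2 * ‖gt xk‖ ^ 2 := by
    rw [hd, norm_neg, norm_smul, mul_pow, Real.norm_eq_abs, sq_abs]
  have h1 := abs_le.1 (herr xk1)
  have h2 := abs_le.1 (herr xk)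
  have hL : (2 * Lk) ≠ 0 := by positivity
  rw [hinner, hnorm] at haccept
  have : ft xk + -(1 / (2 * Lk)) * ‖gt xk‖ ^ 2 + Lk * ((1 / (2 * Lk)) ^ 2 * ‖gt xk‖ ^ 2)
      = ft xk - ‖gt xk‖ ^ 2 / (4 * Lk) := by field_simp; ring
  nlinarith [h1.1, h2.2, haccept]
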